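/- In the model M2, the truth set [R_Ann p] does not belong to the family {[p], [⊥], [¬p], [⊤]}. -/

import Mathlib

/-- Formulas of the language Φ: φ ::= p | ¬φ | φ∨φ | @ₙφ | Rₙφ | Dₙφ,
where `P` is the type of propositional variables and `N` the type of names. -/
inductive Formula (P N : Type) : Type
  | var : P → Formula P N
  | neg : Formula P N → Formula P N
  | disj : Formula P N → Formula P N → Formula P N
  | at_ : N → Formula P N → Formula P N
  | re : N → Formula P N → Formula P N
  | de : N → Formula P N → Formula P N

/-- An epistemic model with extensions. -/
structure Model (P N : Type) where
  W : Type
  A : Type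
  sim : A → W → W → Prop
  sim_equiv : ∀ a, Equivalence (sim a)
  ext : W → N → A
  val : P → Set (W × A)

/-- The satisfaction relation `w, a ⊨ φ`. -/
def Model.sat {P N : Type} (M : Model P N) : Formula P N → M.W → M.A → Prop
  | .var p, w, a => (w, a) ∈ M.val p
  | .neg φ, w, a => ¬ M.sat φ w a
  | .disj φ ψ, w, a => M.sat φ w a ∨ M.sat ψ w a
  | .at_ n φ, w, _ => M.sat φ w (M.ext w n)
  | .re n φ, w, a => ∀ u, M.sim a w u → M.sat φ u (M.ext w n)
  | .de n φ, w, a => ∀ u, M.sim a w u → M.sat φ u (M.ext u n)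

/-- The truth set ⟦φ⟧ of a formula. -/
def Model.truthSet {P N : Type} (M : Model P N) (φ : Formula P N) : Set (M.W × M.A) :=
  {x | M.sat φ x.1 x.2}

/-- The model M2: worlds w=0, u=1; agents a=0, b=1; agent a cannot
distinguish the worlds, agent b can; Ann refers to a in w and b in u;
π(p) = {(w,a),(u,b)}. -/
def M2 : Model Unit Unit where
  W := Fin 2
  A := Fin 2
  sim := fun x s t => x = 0 ∨ s = t
  sim_equiv := fun x =>
    ⟨fun _ => Or.inr rfl, fun h => h.imp id Eq.symm,
     fun h₁ h₂ => by rcases h₁ with h | h <;> rcases h₂ with h' | h' <;> simp_all⟩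
  ext := fun w _ => w
  val := fun _ => {((0 : Fin 2), (0 : Fin 2)), (1, 1)}

/-- The family of truth sets {⟦p⟧, ⟦⊥⟧, ⟦¬p⟧, ⟦⊤⟧} in M2 (⟦⊥⟧ = ∅, ⟦⊤⟧ = W×A). -/
def Fam2 : Set (Set (M2.W × M2.A)) :=
  {M2.truthSet (.var ()), ∅, M2.truthSet (.neg (.var ())), Set.univ}

/-- In M2, ⟦R_Ann p⟧ ∉ {⟦p⟧, ⟦⊥⟧, ⟦¬p⟧, ⟦⊤⟧}. -/
theorem re_p_not_in_Fam2 :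
    M2.truthSet (.re () (.var ())) ∉ Fam2 := by
  intro h
  have h01 : (((0:Fin 2),(1:Fin 2)) : M2.W × M2.A) ∈ M2.truthSet (.re () (.var ())) := by
    intro u hu
    rcases hu with hu | hu
    · exact absurd hu (by decide)
    · subst hu; simp [M2, Model.sat]; exact Or.inl rfl
  have h11 : (((1:Fin 2),(1:Fin 2)) : M2.W × M2.A) ∈ M2.truthSet (.re () (.var ())) := by
    intro u hu
    rcases hu with hu | hu
    · exact absurd hu (by decide)
    · subst hu; simp [M2, Model.sat]; exact Or.inr rfl
  have h00 : (((0:Fin 2),(0:Fin 2)) : M2.W × M2.A) ∉ M2.truthSet (.re () (.var ())) := by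
    intro hc
    have := hc (1:Fin 2) (Or.inl rfl)
    simp [M2, Model.sat] at this
    rcases this with h | h
    · exact absurd (congrArg Prod.fst h) (by decide)
    · exact absurd (congrArg Prod.snd h) (by decide)
  rcases h with h | h | h | h
  · rw [h] at h01
    simp [M2, Model.truthSet, Model.sat] at h01
    rcases h01 with h | h
    · exact absurd (congrArg Prod.snd h) (by decide)
    · exact absurd (congrArg Prod.fst h) (by decide)
  · rw [h] at h11
    exact h11
  · rw [h] at h11
    exact h11 (by simp [M2, Model.truthSet, Model.sat]; exact Or.inr rfl)
  · rw [h] at h00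
    exact h00 (Set.mem_univ _)
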